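/- Let a₁,…,a_m be pairwise distinct nonzero complex numbers and f = ∏ᵢ(x₀x₂ + aᵢx₁²) ∈ ℂ[x₀,x₁,x₂]. Then (x₀, 0, −x₂) is a Jacobian syzygy of f: x₀∂₀f − x₂∂₂f = 0. Moreover ∂₁f does not lie in the ideal (x₀, x₂). -/

import Mathlib

open MvPolynomial

lemma pderiv_finset_prod' {ι : Type*} [DecidableEq ι] (k : Fin 3) (s : Finset ι)
    (p : ι → MvPolynomial (Fin 3) ℂ) :
    pderiv k (∏ i ∈ s, p i) = ∑ i ∈ s, pderiv k (p i) * ∏ j ∈ s.erase i, p j := by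
  induction s using Finset.induction_on with
  | empty => simp
  | insert b s ha ih =>
    rw [Finset.prod_insert ha, pderiv_mul, ih, Finset.sum_insert ha,
      Finset.erase_insert ha, Finset.mul_sum]
    congr 1
    apply Finset.sum_congr rfl
    intro i hi
    rw [Finset.erase_insert_of_ne (by rintro rfl; exact ha hi),
      Finset.prod_insert (by simp [ha, Finset.mem_erase])]
    ring

noncomputable def φaux : MvPolynomial (Fin 3) ℂ →ₐ[ℂ] Polynomial ℂ :=
  aeval ![0, Polynomial.X, 0]

theorem conic_arrangement_syzygy_and_partial
    (m : ℕ) (hm : 1 ≤ m) (a : Fin m → ℂ) (ha : ∀ i, a i ≠ 0)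
    (hdist : ∀ i j, i ≠ j → a i ≠ a j) :
    (X 0 * pderiv 0 (∏ i : Fin m, ((X 0 : MvPolynomial (Fin 3) ℂ) * X 2 + C (a i) * X 1 ^ 2)) -
        X 2 * pderiv 2 (∏ i : Fin m, ((X 0 : MvPolynomial (Fin 3) ℂ) * X 2 + C (a i) * X 1 ^ 2))
        = 0) ∧
      pderiv 1 (∏ i : Fin m, ((X 0 : MvPolynomial (Fin 3) ℂ) * X 2 + C (a i) * X 1 ^ 2)) ∉
        Ideal.span {(X 0 : MvPolynomial (Fin 3) ℂ), X 2} := by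
  constructor
  · rw [pderiv_finset_prod', pderiv_finset_prod', Finset.mul_sum, Finset.mul_sum, sub_eq_zero]
    apply Finset.sum_congr rfl
    intro i _
    have h0 : pderiv (0 : Fin 3) ((X 0 : MvPolynomial (Fin 3) ℂ) * X 2 + C (a i) * X 1 ^ 2)
        = X 2 := by simp [pderiv_mul]
    have h2 : pderiv (2 : Fin 3) ((X 0 : MvPolynomial (Fin 3) ℂ) * X 2 + C (a i) * X 1 ^ 2)
        = X 0 := by simp [pderiv_mul]
    rw [h0, h2]; ring
  · intro hmem
    rw [Ideal.mem_span_pair] at hmem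
    obtain ⟨u, v, huv⟩ := hmem
    have key : φaux (pderiv 1 (∏ i : Fin m,
        ((X 0 : MvPolynomial (Fin 3) ℂ) * X 2 + C (a i) * X 1 ^ 2))) = 0 := by
      rw [← huv]; simp [φaux]
    rw [pderiv_finset_prod', map_sum] at key
    have hterm : ∀ i : Fin m,
        φaux (pderiv 1 ((X 0 : MvPolynomial (Fin 3) ℂ) * X 2 + C (a i) * X 1 ^ 2) *
          ∏ j ∈ Finset.univ.erase i, ((X 0 : MvPolynomial (Fin 3) ℂ) * X 2 + C (a j) * X 1 ^ 2))
        = Polynomial.C (∏ j, a j) * (2 * Polynomial.X) * (Polynomial.X ^ 2) ^ (m - 1) := by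
      intro i
      have h1 : pderiv (1 : Fin 3) ((X 0 : MvPolynomial (Fin 3) ℂ) * X 2 + C (a i) * X 1 ^ 2)
          = C (a i) * (2 * X 1) := by simp [pderiv_mul]
      rw [h1, map_mul, map_prod]
      have h2 : ∀ j : Fin m, φaux ((X 0 : MvPolynomial (Fin 3) ℂ) * X 2 + C (a j) * X 1 ^ 2)
          = Polynomial.C (a j) * Polynomial.X ^ 2 := by intro j; simp [φaux]
      rw [Finset.prod_congr rfl (fun j _ => h2 j), Finset.prod_mul_distrib,
        Finset.prod_const, Finset.card_erase_of_mem (Finset.mem_univ i), Finset.card_univ,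
        Fintype.card_fin]
      have h3 : φaux (C (a i) * (2 * X 1)) = Polynomial.C (a i) * (2 * Polynomial.X) := by
        simp [φaux]
      have h4 : ∏ x ∈ Finset.univ.erase i, Polynomial.C (a x)
          = Polynomial.C (∏ x ∈ Finset.univ.erase i, a x) :=
        (map_prod (Polynomial.C : ℂ →+* Polynomial ℂ) a (Finset.univ.erase i)).symm
      have h5 : a i * ∏ x ∈ Finset.univ.erase i, a x = ∏ j, a j :=
        Finset.mul_prod_erase Finset.univ a (Finset.mem_univ i)
      rw [h3, h4, ← h5, Polynomial.C_mul]
      ring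
    rw [Finset.sum_congr rfl (fun i _ => hterm i), Finset.sum_const, Finset.card_univ,
      Fintype.card_fin, nsmul_eq_mul] at key
    have hne : ((m : Polynomial ℂ) *
        (Polynomial.C (∏ j, a j) * (2 * Polynomial.X) * (Polynomial.X ^ 2) ^ (m - 1))) ≠ 0 := by
      apply mul_ne_zero
      · exact_mod_cast Nat.cast_ne_zero.mpr (by omega)
      apply mul_ne_zero (mul_ne_zero _ _) (pow_ne_zero _ (pow_ne_zero _ Polynomial.X_ne_zero))
      · exact Polynomial.C_ne_zero.mpr (Finset.prod_ne_zero_iff.mpr fun j _ => ha j)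
      · exact mul_ne_zero two_ne_zero Polynomial.X_ne_zero
    exact hne key
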